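/- (Absence of price manipulation, case Δx₁ < 0, Δx₂ > 0, Δx₁ + Δx₂ > 0) Executing a buy of -Δx₁ followed by a sale of Δx₂ yields strictly less total proceeds than the single block sale of Δx = Δx₁ + Δx₂: -Δy₁ - Δy₂ < -Δy, where Δy₁ = -f₋(x,y,Δx₁), Δy₂ = -f₊(x+Δx₁, y+Δy₁, Δx₂), Δy = -f₊(x,y,Δx). -/

import Mathlib

/-- Output of a sale of `z ≥ 0` units of X. -/
noncomputable def fplus (τ β x y z : ℝ) : ℝ := y * (1 - (x / (x + (1 - τ) * z)) ^ β)

/-- For `z < 0`, `-fminus` is the amount of Y paid to receive `-z` units of X. -/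
noncomputable def fminus (τ β x y z : ℝ) : ℝ := y / (1 - τ) * (1 - (x / (x + z)) ^ β)

/-- Absence of price manipulation, case `Δx₁ < 0`, `Δx₂ > 0`, `Δx₁ + Δx₂ > 0`:
a buy of `-Δx₁` followed by a sale of `Δx₂` yields strictly less total proceeds than the
single block sale of `Δx = Δx₁ + Δx₂`. -/
theorem stmt_7 (α τ β x y Δx₁ Δx₂ : ℝ)
    (hα : α ∈ Set.Ioo (0 : ℝ) 1) (hτ : τ ∈ Set.Ioo (0 : ℝ) 1)
    (hβ : β = α / (1 - α)) (hx : 0 < x) (hy : 0 < y)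
    (h1 : Δx₁ < 0) (h2 : 0 < Δx₂) (h12 : 0 < Δx₁ + Δx₂)
    (Δy₁ Δy₂ Δy : ℝ)
    (hΔy₁ : Δy₁ = -fminus τ β x y Δx₁)
    (hΔy₂ : Δy₂ = -fplus τ β (x + Δx₁) (y + Δy₁) Δx₂)
    (hΔy : Δy = -fplus τ β x y (Δx₁ + Δx₂))
    (hx1 : 0 < x + Δx₁) (hy1 : 0 < y + Δy₁)
    (hx2 : 0 < x + Δx₁ + Δx₂) (hy2 : 0 < y + Δy₁ + Δy₂) :
    -Δy₁ - Δy₂ < -Δy := by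
  obtain ⟨hα0, hα1⟩ := hα
  obtain ⟨hτ0, hτ1⟩ := hτ
  have ht : (0:ℝ) < 1 - τ := by linarith
  have ht1 : (1:ℝ) - τ < 1 := by linarith
  have hβ0 : 0 < β := by
    rw [hβ]; exact div_pos hα0 (by linarith)
  -- denominators
  have hD1 : 0 < x + Δx₁ + (1 - τ) * Δx₂ := by positivity
  have hD2 : 0 < x + (1 - τ) * (Δx₁ + Δx₂) := by positivity
  set a : ℝ := x / (x + Δx₁) with ha_def
  set b : ℝ := (x + Δx₁) / (x + Δx₁ + (1 - τ) * Δx₂) with hb_def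
  set c : ℝ := x / (x + (1 - τ) * (Δx₁ + Δx₂)) with hc_def
  have ha1 : 1 < a := (one_lt_div hx1).mpr (by linarith)
  have hb0 : 0 < b := div_pos hx1 hD1
  have hc0 : 0 < c := div_pos hx hD2
  have hab : a * b = x / (x + Δx₁ + (1 - τ) * Δx₂) := by
    rw [ha_def, hb_def]; field_simp
  have hcab : c < a * b := by
    rw [hab, hc_def]
    apply div_lt_div_of_pos_left hx hD1
    nlinarith
  set A : ℝ := a ^ β with hA_def
  set B : ℝ := b ^ β with hB_def
  set C : ℝ := c ^ β with hC_def
  have hA1 : 1 < A := Real.one_lt_rpow_iff_of_pos (by linarith) |>.mpr (Or.inl ⟨ha1, hβ0⟩)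
  have hB0 : 0 < B := Real.rpow_pos_of_pos hb0 β
  have hCAB : C < A * B := by
    rw [hA_def, hB_def, hC_def, ← Real.mul_rpow (by linarith) hb0.le]
    exact Real.rpow_lt_rpow hc0.le hcab hβ0
  -- key inequality
  have key : (1 - τ) * C < B * ((1 - τ) + A - 1) := by
    nlinarith [mul_lt_mul_of_pos_left hCAB ht, mul_pos hB0 (mul_pos hτ0 (sub_pos.mpr hA1))]
  have hΔy₁' : Δy₁ = y / (1 - τ) * (A - 1) := by
    rw [hΔy₁, fminus]; ring
  rw [hΔy₁', hΔy₂, hΔy, fplus, fplus, hΔy₁']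
  have e2 : (x + Δx₁) / (x + Δx₁ + (1 - τ) * Δx₂) = b := rfl
  have e3 : x / (x + (1 - τ) * (Δx₁ + Δx₂)) = c := rfl
  rw [e2, e3, ← hB_def, ← hC_def]
  rw [show y / (1 - τ) * (A - 1) = y * (A - 1) / (1 - τ) by ring]
  set w : ℝ := y * (A - 1) / (1 - τ) with hw_def
  have hw : w * (1 - τ) = y * (A - 1) := div_mul_cancel₀ _ ht.ne'
  clear_value w
  clear hΔy₁ hΔy₂ hΔy hΔy₁' hab hcab e2 e3 hw_def
  clear_value A B C
  clear ha1 hb0 hc0 hA_def hB_def hC_def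
  clear_value a b c
  have h1 : y * ((1 - τ) * C) < y * (B * ((1 - τ) + A - 1)) :=
    mul_lt_mul_of_pos_left key hy
  have h2 : B * (w * (1 - τ)) = B * (y * (A - 1)) := by rw [hw]
  have h3 : 0 < (1 - τ) * (B * y + B * w - y * C) := by nlinarith [h1, h2]
  have hE : 0 < B * y + B * w - y * C := by
    by_contra hE
    push_neg at hE
    have := mul_nonpos_of_nonneg_of_nonpos ht.le hE
    linarith
  nlinarith [hE]
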